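/- Let f : X → ℝ have maximum f* = sup_{x∈X} f(x) attained at x*, and let ℓ be a dissimilarity function such that f* − f(y) ≤ f* − f(x) + max{f* − f(x), ℓ(x,y)} for all x,y ∈ X (weak Lipschitzness). Suppose P ⊆ X is a cell with diameter at most ν₁ρ^h (i.e., ℓ(x,y) ≤ ν₁ρ^h for all x,y ∈ P) and sup_{x∈P} f(x) ≥ f* − c·ν₁ρ^h for some c ≥ 0. Then every y ∈ P satisfies f* − f(y) ≤ max{2c, c+1}·ν₁ρ^h. -/

import Mathlib

theorem stmt_4 {X : Type*} (f : X → ℝ) (ℓ : X → X → ℝ) (fstar : ℝ) (xstar : X)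
    (hmax : f xstar = fstar) (hub : ∀ x, f x ≤ fstar)
    (hweak : ∀ x y, fstar - f y ≤ (fstar - f x) + max (fstar - f x) (ℓ x y))
    (ν₁ ρ : ℝ) (hν : 0 < ν₁) (hρ : ρ ∈ Set.Ioo (0:ℝ) 1) (h : ℕ)
    (P : Set X) (hPne : P.Nonempty) (hPbdd : BddAbove (f '' P))
    (hdiam : ∀ x ∈ P, ∀ y ∈ P, ℓ x y ≤ ν₁ * ρ ^ h)
    (c : ℝ) (hc : 0 ≤ c)
    (hsup : fstar - c * ν₁ * ρ ^ h ≤ sSup (f '' P)) :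
    ∀ y ∈ P, fstar - f y ≤ max (2 * c) (c + 1) * (ν₁ * ρ ^ h) := by
  intro y hy
  set D := ν₁ * ρ ^ h with hD
  have hDpos : 0 < D := mul_pos hν (pow_pos hρ.1 h)
  apply le_of_forall_pos_le_add
  intro ε hε
  obtain ⟨z, hz, hzx⟩ := exists_lt_of_lt_csSup (hPne.image f)
    (show sSup (f '' P) - ε / 2 < sSup (f '' P) by linarith)
  obtain ⟨x, hxP, rfl⟩ := hz
  have hx1 : fstar - f x < c * D + ε / 2 := by
    have : fstar - c * ν₁ * ρ ^ h ≤ sSup (f '' P) := hsup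
    have hcD : c * ν₁ * ρ ^ h = c * D := by ring
    linarith
  have hℓ : ℓ x y ≤ D := hdiam x hxP y hy
  have hmaxle : max (fstar - f x) (ℓ x y) ≤ max (c * D + ε / 2) D :=
    max_le_max hx1.le hℓ
  have key : fstar - f y ≤ (c * D + ε / 2) + max (c * D + ε / 2) D :=
    le_trans (hweak x y) (by linarith [hmaxle, hx1])
  have hfin : (c * D) + max (c * D) D ≤ max (2 * c) (c + 1) * D := by
    rcases le_total (c * D) D with h1 | h1
    · rw [max_eq_right h1]
      calc c * D + D = (c + 1) * D := by ring
        _ ≤ max (2 * c) (c + 1) * D :=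
          mul_le_mul_of_nonneg_right (le_max_right _ _) hDpos.le
    · rw [max_eq_left h1]
      calc c * D + c * D = 2 * c * D := by ring
        _ ≤ max (2 * c) (c + 1) * D :=
          mul_le_mul_of_nonneg_right (le_max_left _ _) hDpos.le
  have : max (c * D + ε / 2) D ≤ max (c * D) D + ε / 2 := by
    apply max_le
    · linarith [le_max_left (c * D) D]
    · linarith [le_max_right (c * D) D]
  linarith
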